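/- Let T be a bounded right-linear operator on a quaternionic Banach space and let s be a quaternion with ‖T‖ < |s|. Then the operator T² - 2·Re(s)·T + |s|²·I is invertible; in particular the S-spectrum σ_S(T) = {s ∈ ℍ : T² - 2Re(s)T + |s|²I not invertible} is contained in the closed ball of radius ‖T‖. -/

import Mathlib

open scoped Quaternion

/-- If some power of `a` has norm `< 1`, then `1 - a` is a unit. -/
lemma aux_isUnit_one_sub_of_pow {R : Type*} [NormedRing R] [CompleteSpace R]
    (a : R) (n : ℕ) (h : ‖a ^ n‖ < 1) : IsUnit (1 - a) := by
  have hu : IsUnit (1 - a ^ n) := (Units.oneSub _ h).isUnit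
  have hc : Commute (1 - a) (∑ i ∈ Finset.range n, a ^ i) := by
    refine Commute.sum_right _ _ _ fun i _ => ?_
    exact ((Commute.one_left a).sub_left (Commute.refl a)).pow_right i
  have hprod : (1 - a) * (∑ i ∈ Finset.range n, a ^ i) = 1 - a ^ n := by
    have := geom_sum_mul a n
    have h2 : (a - 1) * (∑ i ∈ Finset.range n, a ^ i) = a ^ n - 1 := by
      rw [← this]
      exact (Commute.sum_left _ _ _ fun i _ =>
        ((Commute.refl a).sub_right (Commute.one_right a)).pow_left i).eq.symm
    calc (1 - a) * (∑ i ∈ Finset.range n, a ^ i)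
        = -((a - 1) * (∑ i ∈ Finset.range n, a ^ i)) := by
          rw [← neg_sub a 1, neg_mul]
      _ = -(a ^ n - 1) := by rw [h2]
      _ = 1 - a ^ n := by rw [neg_sub]
  have : IsUnit ((1 - a) * (∑ i ∈ Finset.range n, a ^ i)) := hprod ▸ hu
  exact (hc.isUnit_mul_iff.mp this).1

private noncomputable def auxPhi {W : Type*} [NormedAddCommGroup W] [NormedSpace ℝ W]
    (J : W →L[ℝ] W) (w : ℂ) : W →L[ℝ] W :=
  w.re • (1 : W →L[ℝ] W) + w.im • J

set_option maxHeartbeats 1000000 in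
set_option synthInstance.maxHeartbeats 400000 in
theorem sSpectrum_subset_closedBall {V : Type*} [NormedAddCommGroup V] [NormedSpace ℝ V]
    [CompleteSpace V] [Module ℍ[ℝ]ᵐᵒᵖ V]
    (T : V →L[ℝ] V)
    (hT : ∀ (a : ℍ[ℝ]) (v : V), T (MulOpposite.op a • v) = MulOpposite.op a • T v) :
    (∀ s : ℍ[ℝ], ‖T‖ < ‖s‖ →
        IsUnit (T * T - (2 * s.re) • T + (‖s‖ ^ 2) • (1 : V →L[ℝ] V))) ∧
    {s : ℍ[ℝ] | ¬ IsUnit (T * T - (2 * s.re) • T + (‖s‖ ^ 2) • (1 : V →L[ℝ] V))}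
      ⊆ Metric.closedBall 0 ‖T‖ := by
  have main : ∀ s : ℍ[ℝ], ‖T‖ < ‖s‖ →
      IsUnit (T * T - (2 * s.re) • T + (‖s‖ ^ 2) • (1 : V →L[ℝ] V)) := by
    intro s hs
    set r : ℝ := s.re with hr
    have hρ0 : (0:ℝ) < ‖s‖ := lt_of_le_of_lt (norm_nonneg T) hs
    have hr2 : r ^ 2 ≤ ‖s‖ ^ 2 := by
      have h1 : ‖s‖ ^ 2 = Quaternion.normSq s := by
        rw [pow_two, ← Quaternion.normSq_eq_norm_mul_self]
      rw [h1, Quaternion.normSq_def']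
      nlinarith [sq_nonneg s.imI, sq_nonneg s.imJ, sq_nonneg s.imK]
    set m : ℝ := Real.sqrt (‖s‖ ^ 2 - r ^ 2) with hmdef
    have hm : r ^ 2 + m ^ 2 = ‖s‖ ^ 2 := by
      rw [hmdef, Real.sq_sqrt (by linarith)]; ring
    set z : ℂ := ⟨r, m⟩ with hz
    have hznorm : ‖z‖ = ‖s‖ := by
      have : ‖z‖ = Real.sqrt (r ^ 2 + m ^ 2) := by
        rw [Complex.norm_def, Complex.normSq_apply]
        simp [hz, pow_two]
      rw [this, hm, Real.sqrt_sq hρ0.le]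
    -- the doubled space
    set L : (V × V) →L[ℝ] (V × V) := T.prodMap T with hL
    set J : (V × V) →L[ℝ] (V × V) :=
      ContinuousLinearMap.prod (-(ContinuousLinearMap.snd ℝ V V)) (ContinuousLinearMap.fst ℝ V V) with hJ
    have hJapp : ∀ v : V × V, J v = (-v.2, v.1) := fun v => rfl
    have hLapp : ∀ v : V × V, L v = (T v.1, T v.2) := fun v => rfl
    have hJJ : J * J = -1 := by
      ext v <;> simp [ContinuousLinearMap.mul_apply, hJapp]
    have hJL : J * L = L * J := by
      ext v <;>
        simp [ContinuousLinearMap.mul_apply, hJapp, hLapp]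
    have hJnorm : ‖J‖ ≤ 1 := by
      refine ContinuousLinearMap.opNorm_le_bound _ zero_le_one fun v => ?_
      rw [hJapp, one_mul]
      simp only [Prod.norm_def, norm_neg]
      exact le_of_eq (max_comm _ _)
    have hLnorm : ‖L‖ ≤ ‖T‖ := by
      refine ContinuousLinearMap.opNorm_le_bound _ (norm_nonneg T) fun v => ?_
      rw [hLapp]
      simp only [Prod.norm_def]
      refine max_le ?_ ?_
      · exact (T.le_opNorm v.1).trans (by gcongr; exact le_max_left _ _)
      · exact (T.le_opNorm v.2).trans (by gcongr; exact le_max_right _ _)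
    have honeB : ‖(1 : (V × V) →L[ℝ] (V × V))‖ ≤ 1 := by
      rw [ContinuousLinearMap.one_def]
      exact ContinuousLinearMap.norm_id_le
    have hLpow : ∀ k : ℕ, ‖(L : (V × V) →L[ℝ] (V × V)) ^ k‖ ≤ ‖T‖ ^ k := by
      intro k
      induction k with
      | zero => simpa using honeB
      | succ j ih =>
          calc ‖L ^ (j + 1)‖ = ‖L ^ j * L‖ := by rw [pow_succ]
            _ ≤ ‖L ^ j‖ * ‖L‖ := norm_mul_le _ _
            _ ≤ ‖T‖ ^ j * ‖T‖ := mul_le_mul ih hLnorm (norm_nonneg _) (by positivity)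
            _ = ‖T‖ ^ (j + 1) := by rw [pow_succ]
    set φ : ℂ → ((V × V) →L[ℝ] (V × V)) := auxPhi J with hφdef
    have hφ : ∀ w : ℂ, φ w = w.re • 1 + w.im • J := fun _ => rfl
    have φ_one : φ 1 = 1 := by simp [hφ]
    have φ_mul : ∀ w w' : ℂ, φ (w * w') = φ w * φ w' := by
      intro w w'
      simp only [hφ, Complex.mul_re, Complex.mul_im, add_mul, mul_add,
        smul_mul_smul_comm, one_mul, mul_one, hJJ, smul_neg]
      module
    have φ_pow : ∀ (w : ℂ) (n : ℕ), φ (w ^ n) = (φ w) ^ n := by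
      intro w n
      induction n with
      | zero => simpa using φ_one
      | succ k ih => rw [pow_succ, pow_succ, φ_mul, ih]
    have φ_norm : ∀ w : ℂ, ‖φ w‖ ≤ 2 * ‖w‖ := by
      intro w
      have hφw : φ w = w.re • 1 + w.im • J := rfl
      rw [hφw]
      have h1 : ‖w.re • (1 : (V × V) →L[ℝ] (V × V))‖ ≤ ‖w‖ := by
        refine (norm_smul w.re (1 : (V × V) →L[ℝ] (V × V))).le.trans ?_
        calc ‖w.re‖ * ‖(1 : (V × V) →L[ℝ] (V × V))‖ ≤ ‖w.re‖ * 1 := by gcongr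
          _ = |w.re| := by rw [mul_one, Real.norm_eq_abs]
          _ ≤ ‖w‖ := Complex.abs_re_le_norm w
      have h2 : ‖w.im • J‖ ≤ ‖w‖ := by
        refine (norm_smul w.im J).le.trans ?_
        calc ‖w.im‖ * ‖J‖ ≤ ‖w.im‖ * 1 := by gcongr
          _ = |w.im| := by rw [mul_one, Real.norm_eq_abs]
          _ ≤ ‖w‖ := Complex.abs_im_le_norm w
      calc ‖w.re • (1 : (V × V) →L[ℝ] (V × V)) + w.im • J‖
          ≤ ‖w.re • (1 : (V × V) →L[ℝ] (V × V))‖ + ‖w.im • J‖ := norm_add_le _ _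
        _ ≤ ‖w‖ + ‖w‖ := add_le_add h1 h2
        _ = 2 * ‖w‖ := by ring
    have hφL : ∀ w : ℂ, Commute (φ w) L := by
      intro w
      show φ w * L = L * φ w
      simp only [hφ, add_mul, mul_add, smul_mul_assoc, mul_smul_comm, one_mul, mul_one, hJL]
    -- key: for any w with ‖w‖ = ‖s‖, L - φ w is a unit
    have key : ∀ w : ℂ, ‖w‖ = ‖s‖ → IsUnit (L - φ w) := by
      intro w hw
      have hwconj : ‖(starRingEnd ℂ) w‖ = ‖s‖ := by rw [RCLike.norm_conj, hw]
      set y : (V × V) →L[ℝ] (V × V) := ((‖s‖ ^ 2)⁻¹) • (φ ((starRingEnd ℂ) w) * L) with hy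
      have hyn : ∀ n : ℕ, y ^ n = (((‖s‖ ^ 2)⁻¹) ^ n) • (φ (((starRingEnd ℂ) w) ^ n) * L ^ n) := by
        intro n
        induction n with
        | zero => simp [φ_one]
        | succ k ih =>
            rw [pow_succ, ih, hy, smul_mul_smul_comm, ← pow_succ]
            congr 1
            rw [φ_pow, φ_pow, pow_succ, pow_succ]
            have hcomm : L ^ k * φ ((starRingEnd ℂ) w) = φ ((starRingEnd ℂ) w) * L ^ k :=
              ((hφL _).symm.pow_left k).eq
            calc (φ ((starRingEnd ℂ) w)) ^ k * L ^ k * ((φ ((starRingEnd ℂ) w)) * L)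
                = (φ ((starRingEnd ℂ) w)) ^ k * (L ^ k * φ ((starRingEnd ℂ) w)) * L := by
                  rw [mul_assoc, mul_assoc, mul_assoc]
              _ = (φ ((starRingEnd ℂ) w)) ^ k * (φ ((starRingEnd ℂ) w) * L ^ k) * L := by
                  rw [hcomm]
              _ = (φ ((starRingEnd ℂ) w)) ^ k * φ ((starRingEnd ℂ) w) * (L ^ k * L) := by
                  rw [mul_assoc, mul_assoc, mul_assoc]
      have hynorm : ∀ n : ℕ, ‖y ^ n‖ ≤ 2 * (‖T‖ / ‖s‖) ^ n := by
        intro n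
        have h1 : ‖φ (((starRingEnd ℂ) w) ^ n) * L ^ n‖ ≤ (2 * ‖s‖ ^ n) * ‖T‖ ^ n := by
          calc ‖φ (((starRingEnd ℂ) w) ^ n) * L ^ n‖
              ≤ ‖φ (((starRingEnd ℂ) w) ^ n)‖ * ‖L ^ n‖ := norm_mul_le _ _
            _ ≤ (2 * ‖s‖ ^ n) * ‖T‖ ^ n := by
                refine mul_le_mul ?_ ?_ (norm_nonneg _) (mul_nonneg (by norm_num) (pow_nonneg (norm_nonneg s) n))
                · calc ‖φ (((starRingEnd ℂ) w) ^ n)‖ ≤ 2 * ‖((starRingEnd ℂ) w) ^ n‖ :=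
                        φ_norm _
                    _ = 2 * ‖s‖ ^ n := by rw [norm_pow, hwconj]
                · exact hLpow n
        calc ‖y ^ n‖ = ‖((‖s‖ ^ 2)⁻¹ ^ n : ℝ) • (φ (((starRingEnd ℂ) w) ^ n) * L ^ n)‖ := by
              rw [hyn n]
          _ = ‖((‖s‖ ^ 2)⁻¹ ^ n : ℝ)‖ * ‖φ (((starRingEnd ℂ) w) ^ n) * L ^ n‖ :=
              norm_smul ((‖s‖ ^ 2)⁻¹ ^ n : ℝ) (φ (((starRingEnd ℂ) w) ^ n) * L ^ n)
          _ ≤ ((‖s‖ ^ 2)⁻¹) ^ n * ((2 * ‖s‖ ^ n) * ‖T‖ ^ n) := by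
              rw [Real.norm_eq_abs, abs_of_nonneg (by positivity)]
              gcongr
          _ = 2 * (‖T‖ / ‖s‖) ^ n := by
              rw [div_pow, inv_pow, ← pow_mul, mul_comm 2 n, pow_mul]
              field_simp
      -- choose n with 2 * (‖T‖/‖s‖)^n < 1
      obtain ⟨n, hn⟩ : ∃ n : ℕ, (‖T‖ / ‖s‖) ^ n < 1 / 2 := by
        refine exists_pow_lt_of_lt_one (by norm_num) ?_
        rw [div_lt_one hρ0]
        exact hs
      have hyunit : IsUnit (1 - y) := by
        refine aux_isUnit_one_sub_of_pow y n ?_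
        calc ‖y ^ n‖ ≤ 2 * (‖T‖ / ‖s‖) ^ n := hynorm n
          _ < 2 * (1 / 2) := by
              have h0 : (0:ℝ) ≤ (‖T‖ / ‖s‖) ^ n := by positivity
              nlinarith
          _ = 1 := by norm_num
      -- φ w is a unit
      have hww : w * (starRingEnd ℂ) w = ((‖s‖ ^ 2 : ℝ) : ℂ) := by
        rw [Complex.mul_conj]
        norm_cast
        rw [Complex.normSq_eq_norm_sq, hw]
      have hφww : φ w * φ ((starRingEnd ℂ) w) = (‖s‖ ^ 2) • 1 := by
        rw [← φ_mul, hww]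
        simp only [hφ, Complex.ofReal_re, Complex.ofReal_im, zero_smul, add_zero]
      have hφwc : Commute (φ w) (φ ((starRingEnd ℂ) w)) := by
        show _ = _
        rw [← φ_mul, ← φ_mul, mul_comm]
      have hφwunit : IsUnit (φ w) := by
        have hu : IsUnit (φ w * φ ((starRingEnd ℂ) w)) := by
          rw [hφww]
          have : ((‖s‖ ^ 2 : ℝ)) • (1 : (V × V) →L[ℝ] (V × V)) =
              algebraMap ℝ ((V × V) →L[ℝ] (V × V)) (‖s‖ ^ 2) := by
            rw [Algebra.algebraMap_eq_smul_one]
          rw [this]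
          exact (isUnit_iff_ne_zero.2 (by positivity)).map (algebraMap ℝ _)
        exact (hφwc.isUnit_mul_iff.mp hu).1
      -- L - φ w = -(φ w * (1 - y))
      have hfact : L - φ w = -(φ w * (1 - y)) := by
        rw [mul_sub, mul_one, hy, mul_smul_comm, ← mul_assoc, hφww, smul_mul_assoc, one_mul,
          smul_smul, inv_mul_cancel₀ (by positivity : (‖s‖:ℝ) ^ 2 ≠ 0), one_smul]
        rw [neg_sub]
      rw [hfact]
      exact (hφwunit.mul hyunit).neg
    -- both factors are units, their product is qL
    have hMz : IsUnit (L - φ z) := key z hznorm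
    have hMzc : IsUnit (L - φ ((starRingEnd ℂ) z)) := key _ (by rw [RCLike.norm_conj, hznorm])
    have hsum : φ z + φ ((starRingEnd ℂ) z) = (2 * r) • 1 := by
      have hzre : z.re = r := rfl
      have hzim : z.im = m := rfl
      simp only [hφ, Complex.conj_re, Complex.conj_im, hzre, hzim]
      module
    have hprodc : φ ((starRingEnd ℂ) z) * φ z = (‖s‖ ^ 2) • 1 := by
      rw [← φ_mul, mul_comm, Complex.mul_conj]
      have h3 : (Complex.normSq z : ℂ) = ((‖s‖ ^ 2 : ℝ) : ℂ) := by
        norm_cast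
        rw [Complex.normSq_eq_norm_sq, hznorm]
      rw [h3]
      simp only [hφ, Complex.ofReal_re, Complex.ofReal_im, zero_smul, add_zero]
    have hqL : (L - φ z) * (L - φ ((starRingEnd ℂ) z)) =
        L * L - (2 * r) • L + (‖s‖ ^ 2) • 1 := by
      have hcz : φ ((starRingEnd ℂ) z) * L = L * φ ((starRingEnd ℂ) z) := (hφL _).eq
      have e1 : φ z * φ ((starRingEnd ℂ) z) = (‖s‖ ^ 2) • 1 := by
        rw [← φ_mul, mul_comm, φ_mul, hprodc]
      calc (L - φ z) * (L - φ ((starRingEnd ℂ) z))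
          = L * L - L * φ ((starRingEnd ℂ) z) - φ z * L
            + φ z * φ ((starRingEnd ℂ) z) := by
            rw [sub_mul, mul_sub, mul_sub]
            abel
        _ = L * L - (φ z + φ ((starRingEnd ℂ) z)) * L + (‖s‖ ^ 2) • 1 := by
            rw [← hcz, e1, add_mul]
            abel
        _ = L * L - (2 * r) • L + (‖s‖ ^ 2) • 1 := by
            rw [hsum, smul_mul_assoc, one_mul]
    have hqLunit : IsUnit (L * L - (2 * r) • L + (‖s‖ ^ 2) • 1) := by
      rw [← hqL]
      exact hMz.mul hMzc
    -- transfer to qT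
    set qT : V →L[ℝ] V := T * T - (2 * r) • T + (‖s‖ ^ 2) • 1 with hqT
    have happ : ∀ v : V × V,
        (L * L - (2 * r) • L + (‖s‖ ^ 2) • (1 : (V × V) →L[ℝ] (V × V))) v
          = (qT v.1, qT v.2) := by
      intro v
      have hq : ∀ x : V, qT x = T (T x) - (2 * r) • T x + (‖s‖ ^ 2) • x := fun x => rfl
      simp only [ContinuousLinearMap.add_apply, ContinuousLinearMap.sub_apply,
        ContinuousLinearMap.mul_apply, ContinuousLinearMap.smul_apply,
        ContinuousLinearMap.one_apply, hLapp, hq]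
      simp [Prod.ext_iff, Prod.smul_fst, Prod.smul_snd]
    rw [ContinuousLinearMap.isUnit_iff_bijective] at hqLunit ⊢
    constructor
    · intro x x' hxx
      have := hqLunit.1 (a₁ := (x, x)) (a₂ := (x', x')) (by
        rw [happ, happ, hxx])
      exact congrArg Prod.fst this
    · intro wv
      obtain ⟨p, hp⟩ := hqLunit.2 (wv, wv)
      exact ⟨p.1, by have := congrArg Prod.fst (happ p ▸ hp); exact this⟩
  refine ⟨main, ?_⟩
  intro s hsmem
  rw [Metric.mem_closedBall, dist_zero_right]
  by_contra hcon
  exact hsmem (main s (lt_of_not_ge hcon))
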